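/- Let C be a regular, irreducible curve that is projective over a field k, with function field F = k(C), arithmetic genus t, and a k-rational point O, and fix functions f_R as below for all closed points R ≠ O of degree ≥ t+1. If P, Q ≠ O satisfy 2t + 1 ≤ deg(Q) ≤ deg(P) ≤ 3t, then the symbol {f_P, f_Q} lies in L_{3t} + ⟨ {f_R, l} : l a nonzero element of RR_{3t} and R ≠ O a closed point with 2t + 1 ≤ deg(R) ≤ 3t ⟩, as a subgroup of K₂(F). -/

import Mathlib

open scoped TensorProduct

noncomputable section

/-- The set of Steinberg relations in `Fˣ ⊗_ℤ Fˣ` (written additively):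
the elements `a ⊗ b` with `a + b = 1` in `F`. -/
def SteinbergSet (F : Type*) [Field F] :
    Set (TensorProduct ℤ (Additive Fˣ) (Additive Fˣ)) :=
  { x | ∃ a b : Fˣ, (a : F) + (b : F) = 1 ∧
      x = Additive.ofMul a ⊗ₜ[ℤ] Additive.ofMul b }

/-- Milnor's `K₂` of a field, via Matsumoto's presentation. -/
abbrev K2 (F : Type*) [Field F] :=
  (TensorProduct ℤ (Additive Fˣ) (Additive Fˣ)) ⧸
    Submodule.span ℤ (SteinbergSet F)

/-- The symbol `{f, g}` in `K₂(F)`. -/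
def symbol {F : Type*} [Field F] (f g : Fˣ) : K2 F :=
  Submodule.Quotient.mk (Additive.ofMul f ⊗ₜ[ℤ] Additive.ofMul g)

/-- The degree of a divisor `D` on the curve: `∑_P deg(P) · D(P)`,
where `deg P = [k(P) : k]`. -/
def divDeg (k : Type*) [Field k] {Pt : Type*} (res : Pt → Type*)
    [∀ P, Field (res P)] [∀ P, Algebra k (res P)] (D : Pt →₀ ℤ) : ℤ :=
  ∑ᶠ P, (Module.finrank k (res P) : ℤ) * D P

/-- Axioms for a regular, irreducible curve `C`, projective over a field `k`, with
`H⁰(C, O_C) = k`, presented through: its function field `F = k(C)`, its set `Pt` of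
closed points, the residue fields `res P = k(P)`, the normalized valuations `ord P`,
the evaluation maps `ev P` (evaluation at `P` of functions regular at `P`), the
Riemann-Roch spaces `L D = H⁰(C, O_C(D))`, and the arithmetic genus
`t = dim_k H¹(C, O_C)`, characterized by the Riemann-Roch relations. -/
structure IsProjCurve (k F : Type*) [Field k] [Field F] [Algebra k F]
    {Pt : Type*} (res : Pt → Type*) [∀ P, Field (res P)] [∀ P, Algebra k (res P)]
    (ord : Pt → F → ℤ) (ev : ∀ P, F → res P)
    (L : (Pt →₀ ℤ) → Submodule k F) (t : ℕ) : Prop where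
  finiteDimensional_res : ∀ P, FiniteDimensional k (res P)
  ord_mul : ∀ P (f g : F), f ≠ 0 → g ≠ 0 → ord P (f * g) = ord P f + ord P g
  ord_add : ∀ P (f g : F), f ≠ 0 → g ≠ 0 → f + g ≠ 0 →
      min (ord P f) (ord P g) ≤ ord P (f + g)
  ord_algebraMap : ∀ P (c : k), c ≠ 0 → ord P (algebraMap k F c) = 0
  ord_uniformizer : ∀ P, ∃ f : F, f ≠ 0 ∧ ord P f = 1
  ord_separates : ∀ P Q, (∀ f : F, ord P f = ord Q f) → P = Q
  support_finite : ∀ f : F, f ≠ 0 → {P | ord P f ≠ 0}.Finite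
  degree_formula : ∀ f : F, f ≠ 0 →
      ∑ᶠ P, (Module.finrank k (res P) : ℤ) * ord P f = 0
  ev_zero : ∀ P, ev P 0 = 0
  ev_one : ∀ P, ev P 1 = 1
  ev_add : ∀ P (f g : F), f ≠ 0 → g ≠ 0 → 0 ≤ ord P f → 0 ≤ ord P g →
      ev P (f + g) = ev P f + ev P g
  ev_mul : ∀ P (f g : F), f ≠ 0 → g ≠ 0 → 0 ≤ ord P f → 0 ≤ ord P g →
      ev P (f * g) = ev P f * ev P g
  ev_algebraMap : ∀ P (c : k), ev P (algebraMap k F c) = algebraMap k (res P) c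
  ev_eq_zero_iff : ∀ P (f : F), f ≠ 0 → 0 ≤ ord P f → (ev P f = 0 ↔ 0 < ord P f)
  ev_surjective : ∀ P (y : res P), ∃ f : F, f ≠ 0 ∧ 0 ≤ ord P f ∧ ev P f = y
  mem_L : ∀ (D : Pt →₀ ℤ) (f : F), f ∈ L D ↔ (f ≠ 0 → ∀ P, 0 ≤ D P + ord P f)
  finiteDimensional_L : ∀ D, FiniteDimensional k (L D)
  global_sections : ∀ f : F, f ∈ L 0 ↔ ∃ c : k, algebraMap k F c = f
  rr_ineq : ∀ D : Pt →₀ ℤ,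
      divDeg k res D + 1 - t ≤ (Module.finrank k (L D) : ℤ)
  rr_eq : ∀ D : Pt →₀ ℤ, 2 * (t : ℤ) - 2 < divDeg k res D →
      (Module.finrank k (L D) : ℤ) = divDeg k res D + 1 - t

/-- `T` is the tame symbol `K₂(F) → ∐_{P} k(P)^*`: it is determined by
`T_P({f,g}) = (-1)^{ord_P(f)·ord_P(g)} (f^{ord_P(g)} / g^{ord_P(f)})(P)`. -/
def IsTameSymbol {F : Type*} [Field F] {Pt : Type*} {res : Pt → Type*}
    [∀ P, Field (res P)]
    (ord : Pt → F → ℤ) (ev : ∀ P, F → res P)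
    (T : K2 F →+ Π₀ P : Pt, Additive ((res P)ˣ)) : Prop :=
  ∀ (f g : Fˣ) (P : Pt),
    ((Additive.toMul (T (symbol f g) P) : (res P)ˣ) : res P) =
      ev P (((-1 : Fˣ) ^ (ord P (f : F) * ord P (g : F)) *
        f ^ (ord P (g : F)) * g ^ (-ord P (f : F)) : Fˣ) : F)

/-- `L_d`: the subgroup of `K₂(F)` generated by the symbols `{l, m}` with `l, m`
nonzero elements of the Riemann-Roch space `H⁰(C, O_C(d(O)))`. -/
def Lsub {k F : Type*} [Field k] [Field F] [Algebra k F] {Pt : Type*}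
    (L : (Pt →₀ ℤ) → Submodule k F) (O : Pt) (d : ℤ) : AddSubgroup (K2 F) :=
  AddSubgroup.closure
    { x | ∃ l m : Fˣ, (l : F) ∈ L (Finsupp.single O d) ∧
        (m : F) ∈ L (Finsupp.single O d) ∧ x = symbol l m }
section SymbolLemmas

variable {F : Type*} [Field F]

theorem symbol_mul_left (f g h : Fˣ) : symbol (f * g) h = symbol f h + symbol g h := by
  unfold symbol
  rw [← Submodule.Quotient.mk_add]
  congr 1
  rw [ofMul_mul, TensorProduct.add_tmul]

theorem symbol_mul_right (f g h : Fˣ) : symbol f (g * h) = symbol f g + symbol f h := by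
  unfold symbol
  rw [← Submodule.Quotient.mk_add]
  congr 1
  rw [ofMul_mul, TensorProduct.tmul_add]

theorem symbol_inv_left (f h : Fˣ) : symbol f⁻¹ h = -symbol f h := by
  unfold symbol
  rw [← Submodule.Quotient.mk_neg, ← TensorProduct.neg_tmul, ← ofMul_inv]

theorem symbol_inv_right (f h : Fˣ) : symbol f h⁻¹ = -symbol f h := by
  unfold symbol
  rw [← Submodule.Quotient.mk_neg, ← TensorProduct.tmul_neg, ← ofMul_inv]

theorem symbol_one_left (h : Fˣ) : symbol 1 h = 0 := by
  unfold symbol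
  rw [show (Additive.ofMul (1 : Fˣ)) = 0 from rfl, TensorProduct.zero_tmul,
    Submodule.Quotient.mk_zero]

theorem steinberg (a b : Fˣ) (hab : (a : F) + (b : F) = 1) : symbol a b = 0 := by
  unfold symbol
  rw [Submodule.Quotient.mk_eq_zero]
  exact Submodule.subset_span ⟨a, b, hab, rfl⟩

theorem symbol_neg_self (u : Fˣ) : symbol u (-u) = 0 := by
  rcases eq_or_ne u 1 with rfl | hu
  · exact symbol_one_left _
  · have hu' : (u : F) ≠ 1 := fun h => hu (Units.ext h)
    have h1 : (1 : F) - (u : F) ≠ 0 := sub_ne_zero.2 (Ne.symm hu')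
    have hui : ((u⁻¹ : Fˣ) : F) ≠ 1 := by
      rw [Units.val_inv_eq_inv_val, Ne, inv_eq_one]; exact hu'
    have h2 : (1 : F) - ((u⁻¹ : Fˣ) : F) ≠ 0 := sub_ne_zero.2 (Ne.symm hui)
    set W : Fˣ := Units.mk0 _ h1
    set W' : Fˣ := Units.mk0 _ h2
    have key : -u = W * W'⁻¹ := by
      rw [eq_comm, mul_inv_eq_iff_eq_mul]
      ext
      push_cast [W, W', Units.val_mk0]
      field_simp
      ring
    rw [key, symbol_mul_right, symbol_inv_right]
    have s1 : symbol u W = 0 := steinberg _ _ (by simp [W])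
    have s2 : symbol u W' = 0 := by
      have := steinberg u⁻¹ W' (by push_cast [W']; simp)
      rw [symbol_inv_left, neg_eq_zero] at this
      exact this
    rw [s1, s2, neg_zero, add_zero]

theorem symbol_antisymm (u v : Fˣ) : symbol v u = -symbol u v := by
  have h := symbol_neg_self (u * v)
  rw [symbol_mul_left] at h
  have e1 : symbol u (-(u * v)) = symbol u (-u) + symbol u v := by
    rw [← neg_mul, symbol_mul_right]
  have e2 : symbol v (-(u * v)) = symbol v u + symbol v (-v) := by
    rw [← mul_neg, symbol_mul_right]
  rw [e1, e2, symbol_neg_self, symbol_neg_self] at h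
  rw [eq_neg_iff_add_eq_zero, add_comm]
  simpa using h

end SymbolLemmas

section DivDegLemmas

variable (k : Type*) [Field k] {Pt : Type*} (res : Pt → Type*)
  [∀ P, Field (res P)] [∀ P, Algebra k (res P)]

theorem divDeg_support_finite (D : Pt →₀ ℤ) :
    (Function.support fun P => (Module.finrank k (res P) : ℤ) * D P).Finite := by
  apply D.finite_support.subset
  intro P hP
  simp only [Function.mem_support] at hP ⊢
  exact fun h => hP (by rw [h, mul_zero])

theorem divDeg_add (D1 D2 : Pt →₀ ℤ) :
    divDeg k res (D1 + D2) = divDeg k res D1 + divDeg k res D2 := by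
  unfold divDeg
  rw [← finsum_add_distrib (divDeg_support_finite k res D1) (divDeg_support_finite k res D2)]
  apply finsum_congr
  intro P
  rw [Finsupp.add_apply, mul_add]

theorem divDeg_single (P0 : Pt) (n : ℤ) :
    divDeg k res (Finsupp.single P0 n) = (Module.finrank k (res P0) : ℤ) * n := by
  unfold divDeg
  classical
  rw [finsum_eq_single _ P0 (fun x hx => by
    rw [Finsupp.single_apply, if_neg (fun h => hx h.symm), mul_zero])]
  rw [Finsupp.single_eq_same]

end DivDegLemmas
/-- Lemma `PQlemma`(2).  Let `C` be a regular, irreducible curve,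
projective over `k`, with function field `F`, arithmetic genus `t` and a `k`-rational
point `O`, and fix for every closed point `R ≠ O` with `deg(R) ≥ t + 1` a function
`f_R` with divisor `(R) - D_R - (deg(R) - t)(O)`, `D_R` effective of degree `t`.
If `2t + 1 ≤ deg(Q) ≤ deg(P) ≤ 3t` (with `P, Q ≠ O`), then `{f_P, f_Q}` lies in
`L_{3t} + ⟨{f_R, l} : l ∈ RR_{3t}^*, 2t + 1 ≤ deg(R) ≤ 3t⟩`. -/
theorem statement13 (k F : Type*) [Field k] [Field F] [Algebra k F]
    {Pt : Type*} (res : Pt → Type*) [∀ P, Field (res P)] [∀ P, Algebra k (res P)]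
    (ord : Pt → F → ℤ) (ev : ∀ P, F → res P)
    (L : (Pt →₀ ℤ) → Submodule k F) (t : ℕ)
    (hC : IsProjCurve k F res ord ev L t)
    (O : Pt) (hO : Module.finrank k (res O) = 1)
    (fR : Pt → Fˣ) (DR : Pt → (Pt →₀ ℤ))
    (hfR : ∀ R, R ≠ O → t + 1 ≤ Module.finrank k (res R) →
      (∀ Q, 0 ≤ DR R Q) ∧ divDeg k res (DR R) = t ∧
      ∀ Q, ord Q (fR R : F) =
        ((Finsupp.single R 1 - DR R -
          ((Module.finrank k (res R) : ℤ) - t) • Finsupp.single O 1 : Pt →₀ ℤ)) Q)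
    (P Q : Pt) (hP : P ≠ O) (hQ : Q ≠ O)
    (hQ1 : 2 * t + 1 ≤ Module.finrank k (res Q))
    (hQP : Module.finrank k (res Q) ≤ Module.finrank k (res P))
    (hP3t : Module.finrank k (res P) ≤ 3 * t) :
    symbol (fR P) (fR Q) ∈
      Lsub L O (3 * t : ℤ) ⊔ AddSubgroup.closure
        { x | ∃ (R : Pt) (l : Fˣ), R ≠ O ∧
            2 * t + 1 ≤ Module.finrank k (res R) ∧ Module.finrank k (res R) ≤ 3 * t ∧
            (l : F) ∈ L (Finsupp.single O (3 * t : ℤ)) ∧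
            x = symbol (fR R) l } := by
  classical
  obtain ⟨hDPnn, hDPdeg, hordP⟩ := hfR P hP (by omega)
  obtain ⟨hDQnn, hDQdeg, hordQ⟩ := hfR Q hQ (by omega)
  set dP := Module.finrank k (res P) with hdP
  set dQ := Module.finrank k (res Q) with hdQ
  set D3 : Pt →₀ ℤ := Finsupp.single O (3 * t : ℤ) with hD3
  set u : Fˣ := fR P with hu
  set v : Fˣ := fR Q with hv
  -- the main reduction: it suffices to prove membership in any subgroup containing
  -- all symbols of elements of `L D3` and all symbols `{f_R, l}`
  have main : ∀ (Gr : AddSubgroup (K2 F)),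
      (∀ l m : Fˣ, (l : F) ∈ L D3 → (m : F) ∈ L D3 → symbol l m ∈ Gr) →
      (∀ (R : Pt) (l : Fˣ), R ≠ O → 2 * t + 1 ≤ Module.finrank k (res R) →
        Module.finrank k (res R) ≤ 3 * t → (l : F) ∈ L D3 → symbol (fR R) l ∈ Gr) →
      symbol u v ∈ Gr := by
    intro Gr hGL hGN
    have hGN' : ∀ (R : Pt) (l : Fˣ), R ≠ O → 2 * t + 1 ≤ Module.finrank k (res R) →
        Module.finrank k (res R) ≤ 3 * t → (l : F) ∈ L D3 → symbol l (fR R) ∈ Gr := by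
      intro R l h1 h2 h3 h4
      rw [symbol_antisymm]
      exact neg_mem (hGN R l h1 h2 h3 h4)
    -- basic memberships in L D3
    have h1L : (1 : F) ∈ L D3 := by
      rw [hC.mem_L]
      intro _ R'
      have : ord R' (1 : F) = 0 := by
        have := hC.ord_algebraMap R' 1 one_ne_zero
        rwa [map_one] at this
      rw [this, add_zero, hD3, Finsupp.single_apply]
      split <;> omega
    have hm1 : ((-1 : Fˣ) : F) ∈ L D3 := by
      rw [Units.val_neg, Units.val_one]
      exact neg_mem h1L
    -- the auxiliary divisor M
    set M : Pt →₀ ℤ := DR P + DR Q + Finsupp.single O (2 * t + dP : ℤ) with hM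
    have hmulP : ∀ a : F, a ∈ L D3 → a * (u : F) ∈ L M := by
      intro a ha
      rcases eq_or_ne a 0 with rfl | ha0
      · rw [zero_mul]; exact (L M).zero_mem
      rw [hC.mem_L]
      intro _ R'
      rw [hC.ord_mul R' a _ ha0 (Units.ne_zero _), hordP R']
      have h1 := (hC.mem_L D3 a).mp ha ha0 R'
      have h2 := hDQnn R'
      have h3 := hDPnn R'
      simp only [hD3, hM, Finsupp.add_apply, Finsupp.coe_sub, Pi.sub_apply,
        Finsupp.smul_apply, Finsupp.single_apply, smul_eq_mul] at h1 ⊢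
      split_ifs at h1 ⊢ with hO' hP'
      · exact absurd (hP'.trans hO'.symm) hP
      all_goals omega
    have hmulQ : ∀ b : F, b ∈ L D3 → b * (v : F) ∈ L M := by
      intro b hb
      rcases eq_or_ne b 0 with rfl | hb0
      · rw [zero_mul]; exact (L M).zero_mem
      rw [hC.mem_L]
      intro _ R'
      rw [hC.ord_mul R' b _ hb0 (Units.ne_zero _), hordQ R']
      have h1 := (hC.mem_L D3 b).mp hb hb0 R'
      have h2 := hDQnn R'
      have h3 := hDPnn R'
      simp only [hD3, hM, Finsupp.add_apply, Finsupp.coe_sub, Pi.sub_apply,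
        Finsupp.smul_apply, Finsupp.single_apply, smul_eq_mul] at h1 ⊢
      split_ifs at h1 ⊢ with hO' hQ'
      · exact absurd (hQ'.trans hO'.symm) hQ
      all_goals omega
    have hVW : ∀ f : F, f ∈ L D3 → f ∈ L M := by
      intro f hf
      rcases eq_or_ne f 0 with rfl | hf0
      · exact (L M).zero_mem
      rw [hC.mem_L]
      intro _ R'
      have h1 := (hC.mem_L D3 f).mp hf hf0 R'
      have h2 := hDQnn R'
      have h3 := hDPnn R'
      simp only [hD3, hM, Finsupp.add_apply, Finsupp.single_apply] at h1 ⊢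
      split_ifs at h1 ⊢ <;> omega
    -- dimension computations
    haveI := hC.finiteDimensional_L D3
    haveI := hC.finiteDimensional_L M
    have hdegD3 : divDeg k res D3 = 3 * t := by
      rw [hD3, divDeg_single, hO]
      push_cast
      ring
    have hdegM : divDeg k res M = 4 * t + dP := by
      rw [hM, divDeg_add, divDeg_add, hDPdeg, hDQdeg, divDeg_single, hO]
      push_cast
      ring
    have hrkV : Module.finrank k (L D3) = 2 * t + 1 := by
      have := hC.rr_eq D3 (by rw [hdegD3]; omega)
      rw [hdegD3] at this
      omega
    have hrkW : Module.finrank k (L M) = 3 * t + dP + 1 := by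
      have := hC.rr_eq M (by rw [hdegM]; omega)
      rw [hdegM] at this
      omega
    -- the linear map (a, b) ↦ a f_P + b f_Q into L M, then to the quotient by L D3
    set S : Submodule k (L M) := Submodule.comap (L M).subtype (L D3) with hS
    have hrkS : Module.finrank k (L D3) ≤ Module.finrank k S := by
      let ι : (L D3) →ₗ[k] S :=
        { toFun := fun w => ⟨⟨(w : F), hVW _ w.2⟩, w.2⟩
          map_add' := fun _ _ => rfl
          map_smul' := fun _ _ => rfl }
      exact LinearMap.finrank_le_finrank_of_injective
        (f := ι) (fun w₁ w₂ h => Subtype.ext (congrArg (fun z : S => ((z : L M) : F)) h))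
    let Φ₀ : (L D3 × L D3) →ₗ[k] L M :=
      { toFun := fun x => ⟨(x.1 : F) * (u : F) + (x.2 : F) * (v : F),
          (L M).add_mem (hmulP _ x.1.2) (hmulQ _ x.2.2)⟩
        map_add' := fun x y => Subtype.ext (by
          simp only [Prod.fst_add, Prod.snd_add, Submodule.coe_add]
          ring)
        map_smul' := fun c x => Subtype.ext (by
          simp only [Prod.smul_fst, Prod.smul_snd, Submodule.coe_smul, RingHom.id_apply,
            smul_add, smul_mul_assoc]) }
    let Φ : (L D3 × L D3) →ₗ[k] (L M ⧸ S) := S.mkQ.comp Φ₀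
    have hnotinj : ¬ Function.Injective Φ := by
      intro hinj
      have h1 := LinearMap.finrank_le_finrank_of_injective hinj
      rw [Module.finrank_prod] at h1
      have h2 := S.finrank_quotient_add_finrank
      omega
    have hker : LinearMap.ker Φ ≠ ⊥ := fun h => hnotinj (LinearMap.ker_eq_bot.mp h)
    obtain ⟨x, hxker, hx0⟩ := Submodule.exists_mem_ne_zero_of_ne_bot hker
    have hxS : ((x.1 : F) * (u : F) + (x.2 : F) * (v : F)) ∈ L D3 := by
      have hx : Φ x = 0 := hxker
      rw [LinearMap.comp_apply, Submodule.mkQ_apply, Submodule.Quotient.mk_eq_zero,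
        hS, Submodule.mem_comap] at hx
      exact hx
    set a : F := (x.1 : F) with ha
    set b : F := (x.2 : F) with hb
    have haL : a ∈ L D3 := x.1.2
    have hbL : b ∈ L D3 := x.2.2
    have hab : a ≠ 0 ∨ b ≠ 0 := by
      by_contra h
      push_neg at h
      exact hx0 (Prod.ext (Subtype.ext h.1) (Subtype.ext h.2))
    rcases eq_or_ne a 0 with ha0 | ha0
    · -- a = 0 : f_Q is a ratio of elements of L D3
      have hb0 : b ≠ 0 := hab.resolve_left (not_not_intro ha0)
      rw [ha0, zero_mul, zero_add] at hxS
      have hc0 : b * (v : F) ≠ 0 := mul_ne_zero hb0 (Units.ne_zero _)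
      set B : Fˣ := Units.mk0 b hb0 with hB
      set C : Fˣ := Units.mk0 _ hc0 with hCdef
      have hvCB : v = C * B⁻¹ := by
        ext
        push_cast [hCdef, hB, Units.val_mk0]
        field_simp
      rw [hvCB, symbol_mul_right, symbol_inv_right]
      exact add_mem (hGN P C hP (by omega) hP3t hxS)
        (neg_mem (hGN P B hP (by omega) hP3t hbL))
    rcases eq_or_ne b 0 with hb0 | hb0
    · -- b = 0 : f_P is a ratio of elements of L D3
      rw [hb0, zero_mul, add_zero] at hxS
      have hc0 : a * (u : F) ≠ 0 := mul_ne_zero ha0 (Units.ne_zero _)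
      set A : Fˣ := Units.mk0 a ha0 with hA
      set C : Fˣ := Units.mk0 _ hc0 with hCdef
      have huCA : u = C * A⁻¹ := by
        ext
        push_cast [hCdef, hA, Units.val_mk0]
        field_simp
      rw [huCA, symbol_mul_left, symbol_inv_left]
      exact add_mem (hGN' Q C hQ hQ1 (by omega) hxS)
        (neg_mem (hGN' Q A hQ hQ1 (by omega) haL))
    set A : Fˣ := Units.mk0 a ha0 with hA
    set B : Fˣ := Units.mk0 b hb0 with hB
    rcases eq_or_ne (a * (u : F) + b * (v : F)) 0 with hc0 | hc0
    · -- a f_P + b f_Q = 0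
      have hveq : v = (-A) * u * B⁻¹ := by
        ext
        push_cast [hA, hB, Units.val_mk0]
        field_simp
        linear_combination hc0
      have huu : symbol u u = symbol u (-1) := by
        nth_rewrite 2 [show u = (-1 : Fˣ) * -u by rw [neg_one_mul, neg_neg]]
        rw [symbol_mul_right, symbol_neg_self, add_zero]
      rw [hveq, symbol_mul_right, symbol_mul_right, symbol_inv_right, huu]
      refine add_mem (add_mem ?_ ?_) (neg_mem ?_)
      · exact hGN P (-A) hP (by omega) hP3t (by rw [Units.val_neg]; exact neg_mem haL)
      · exact hGN P (-1) hP (by omega) hP3t hm1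
      · exact hGN P B hP (by omega) hP3t hbL
    · -- the generic case: use the Steinberg relation for a f_P / c and b f_Q / c
      set c : F := a * (u : F) + b * (v : F) with hcdef
      set C : Fˣ := Units.mk0 c hc0 with hC
      have hsum : ((A * u * C⁻¹ : Fˣ) : F) + ((B * v * C⁻¹ : Fˣ) : F) = 1 := by
        push_cast [hA, hB, hC, Units.val_mk0]
        field_simp
        exact hcdef.symm
      have h0 : symbol (A * u * C⁻¹) (B * v * C⁻¹) = 0 := steinberg _ _ hsum
      have hexp : symbol (A * u * C⁻¹) (B * v * C⁻¹) =
          symbol A B + symbol A v - symbol A C + symbol u B + symbol u v -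
            symbol u C - symbol C B - symbol C v + symbol C C := by
        simp only [symbol_mul_left, symbol_mul_right, symbol_inv_left, symbol_inv_right]
        abel
      have key : symbol u v = symbol A C + symbol u C + symbol C B + symbol C v -
          symbol A B - symbol A v - symbol u B - symbol C C := by
        rw [← sub_eq_zero, ← h0, hexp]
        abel
      rw [key]
      refine sub_mem (sub_mem (sub_mem (sub_mem (add_mem (add_mem (add_mem ?_ ?_) ?_) ?_) ?_) ?_) ?_) ?_
      · exact hGL A C haL hxS
      · exact hGN P C hP (by omega) hP3t hxS
      · exact hGL C B hxS hbL
      · exact hGN' Q C hQ hQ1 (by omega) hxS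
      · exact hGL A B haL hbL
      · exact hGN' Q A hQ hQ1 (by omega) haL
      · exact hGN P B hP (by omega) hP3t hbL
      · exact hGL C C hxS hxS
  refine main _ (fun l m hl hm => ?_) (fun R l h1 h2 h3 h4 => ?_)
  · exact SetLike.le_def.mp le_sup_left
      (AddSubgroup.subset_closure (⟨l, m, hl, hm, rfl⟩ :
        _ ∈ { x | ∃ l m : Fˣ, (l : F) ∈ L (Finsupp.single O (3 * t : ℤ)) ∧
          (m : F) ∈ L (Finsupp.single O (3 * t : ℤ)) ∧ x = symbol l m }))
  · exact SetLike.le_def.mp le_sup_right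
      (AddSubgroup.subset_closure (show _ ∈ { x | ∃ (R : Pt) (l : Fˣ), R ≠ O ∧
          2 * t + 1 ≤ Module.finrank k (res R) ∧ Module.finrank k (res R) ≤ 3 * t ∧
          (l : F) ∈ L (Finsupp.single O (3 * t : ℤ)) ∧
          x = symbol (fR R) l } from ⟨R, l, h1, h2, h3, h4, rfl⟩))

end
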